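/- Let Φ be a real M×N matrix, y ∈ ℝ^M, λ > 0 and τ > 0. Let C : ℝ^N → ℝ be differentiable and T : ℝ^N → ℝ^N be differentiable, and suppose the (possibly non-separable) cost–activation relation λ·∇C(T(x)) = x − T(x) holds for all x ∈ ℝ^N, and that the derivative DT(x) is positive semidefinite in the sense that ⟨v, DT(x)·v⟩ ≥ 0 for all x, v ∈ ℝ^N. Suppose u : ℝ → ℝ^N is differentiable and satisfies τ·u′(t) = Φᵀy − u(t) − (ΦᵀΦ − I)·T(u(t)). Then for every t the map t ↦ E(T(u(t))) has derivative equal to −τ·⟨u′(t), DT(u(t))·u′(t)⟩, which is ≤ 0. -/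

import Mathlib

open Matrix

/-- For the LCA dynamics with a (possibly non-separable) cost
`C : ℝ^N → ℝ` and activation `T : ℝ^N → ℝ^N` satisfying
`λ ∇C(T(x)) = x − T(x)` (stated against arbitrary directions `v`) and with the
derivative `DT(x)` positive semidefinite, the energy
`E(a) = (1/2)‖y − Φa‖² + λ C(a)` evaluated along `a(t) = T(u(t))` has derivative
`−τ ⟨u′(t), DT(u(t)) u′(t)⟩ ≤ 0`. -/
theorem lca_energy_decreasing_nonseparable {M N : ℕ}
    (Φ : Matrix (Fin M) (Fin N) ℝ) (y : Fin M → ℝ)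
    (lam τ : ℝ) (hlam : 0 < lam) (hτ : 0 < τ)
    (C : (Fin N → ℝ) → ℝ) (T : (Fin N → ℝ) → (Fin N → ℝ))
    (hC : Differentiable ℝ C) (hT : Differentiable ℝ T)
    (hrel : ∀ x v : Fin N → ℝ,
      lam * fderiv ℝ C (T x) v = ∑ n, (x n - T x n) * v n)
    (hpsd : ∀ x v : Fin N → ℝ, 0 ≤ ∑ n, v n * (fderiv ℝ T x v) n)
    (u : ℝ → Fin N → ℝ) (hu : Differentiable ℝ u)
    (hdyn : ∀ t : ℝ, τ • deriv u t =
      Φ.transpose *ᵥ y - u t - (Φ.transpose * Φ - 1) *ᵥ T (u t))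
    (E : (Fin N → ℝ) → ℝ)
    (hE : ∀ a : Fin N → ℝ,
      E a = (1/2) * ∑ m, (y m - (Φ *ᵥ a) m)^2 + lam * C a) :
    ∀ t : ℝ,
      HasDerivAt (fun s => E (T (u s)))
        (-τ * ∑ n, deriv u t n * (fderiv ℝ T (u t) (deriv u t)) n) t ∧
      -τ * ∑ n, deriv u t n * (fderiv ℝ T (u t) (deriv u t)) n ≤ 0 := by

  intro t
  set u' := deriv u t with hu'
  have hud : HasDerivAt u u' t := (hu t).hasDerivAt
  set a' := (fderiv ℝ T (u t)) u' with ha'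
  have haT : HasDerivAt (fun s => T (u s)) a' t :=
    (hT (u t)).hasFDerivAt.comp_hasDerivAt t hud
  have haTn : ∀ n, HasDerivAt (fun s => T (u s) n) (a' n) t :=
    fun n => (hasDerivAt_pi.mp haT) n
  have hlin : ∀ m, HasDerivAt (fun s => ∑ n, Φ m n * T (u s) n)
      (∑ n, Φ m n * a' n) t := fun m =>
    HasDerivAt.fun_sum (fun n _ => (haTn n).const_mul (Φ m n))
  have hsq : ∀ m, HasDerivAt (fun s => (y m - ∑ n, Φ m n * T (u s) n)^2)
      (2 * (y m - ∑ n, Φ m n * T (u t) n) * (0 - ∑ n, Φ m n * a' n)) t := by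
    intro m
    have := ((hasDerivAt_const t (y m)).fun_sub (hlin m)).fun_pow 2
    simpa using this
  have hpart1 : HasDerivAt (fun s => (1/2:ℝ) * ∑ m, (y m - (Φ *ᵥ T (u s)) m)^2)
      ((1/2:ℝ) * ∑ m, 2 * (y m - ∑ n, Φ m n * T (u t) n) * (0 - ∑ n, Φ m n * a' n)) t := by
    have := (HasDerivAt.fun_sum (fun m (_ : m ∈ Finset.univ) => hsq m)).const_mul (1/2:ℝ)
    simpa [Matrix.mulVec, dotProduct] using this
  have hpart2 : HasDerivAt (fun s => lam * C (T (u s)))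
      (lam * fderiv ℝ C (T (u t)) a') t :=
    ((hC (T (u t))).hasFDerivAt.comp_hasDerivAt t haT).const_mul lam
  have hsum := hpart1.add hpart2
  have hEeq : (fun s => E (T (u s))) = fun s =>
      (1/2:ℝ) * ∑ m, (y m - (Φ *ᵥ T (u s)) m)^2 + lam * C (T (u s)) := by
    funext s; rw [hE]
  have hd : ∀ n, τ * u' n = (∑ m, Φ m n * (y m - ∑ k, Φ m k * T (u t) k))
      - u t n + T (u t) n := by
    intro n
    have h0 := congrFun (hdyn t) n
    rw [← hu'] at h0
    have h1 : (τ • u') n = τ * u' n := rfl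
    rw [h1] at h0
    have h2 : ((Φ.transpose * Φ - 1) *ᵥ T (u t)) = (Φ.transpose *ᵥ (Φ *ᵥ T (u t))) - T (u t) := by
      rw [Matrix.sub_mulVec, Matrix.one_mulVec, Matrix.mulVec_mulVec]
    rw [h2] at h0
    have h3 : (Φ.transpose *ᵥ y - u t - ((Φ.transpose *ᵥ (Φ *ᵥ T (u t))) - T (u t))) n
        = (∑ m, Φ m n * y m) - u t n
          - ((∑ m, Φ m n * ∑ k, Φ m k * T (u t) k) - T (u t) n) := by
      simp only [Pi.sub_apply, Matrix.mulVec, dotProduct, Matrix.transpose_apply]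
    rw [h3] at h0
    rw [h0]
    simp only [mul_sub, Finset.sum_sub_distrib]
    ring
  have hswap : ∑ m, (y m - ∑ k, Φ m k * T (u t) k) * (∑ n, Φ m n * a' n)
      = ∑ n, (∑ m, Φ m n * (y m - ∑ k, Φ m k * T (u t) k)) * a' n := by
    simp_rw [Finset.mul_sum, Finset.sum_mul]
    rw [Finset.sum_comm]
    exact Finset.sum_congr rfl fun n _ => Finset.sum_congr rfl fun m _ => by ring
  have hval : (1/2:ℝ) * ∑ m, 2 * (y m - ∑ n, Φ m n * T (u t) n) * (0 - ∑ n, Φ m n * a' n)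
      + lam * fderiv ℝ C (T (u t)) a'
      = -τ * ∑ n, u' n * a' n := by
    rw [hrel (u t) a']
    have h2 : (1/2:ℝ) * ∑ m, 2 * (y m - ∑ n, Φ m n * T (u t) n) * (0 - ∑ n, Φ m n * a' n)
        = -∑ m, (y m - ∑ k, Φ m k * T (u t) k) * (∑ n, Φ m n * a' n) := by
      rw [Finset.mul_sum, ← Finset.sum_neg_distrib]
      exact Finset.sum_congr rfl fun m _ => by ring
    rw [h2, hswap, Finset.mul_sum, ← Finset.sum_neg_distrib, ← Finset.sum_add_distrib]
    exact Finset.sum_congr rfl fun n _ => by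
      have := hd n
      linear_combination (a' n) * this
  constructor
  · rw [hEeq, ← hval]
    exact hsum
  · have hp := hpsd (u t) u'
    rw [← ha'] at hp
    nlinarith [hp, hτ]
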